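/- arXiv:1907.12546 — 2 statements merged into one kernel-verified Lean document; each statement's English description precedes it below -/
import Mathlib

section
/- Let n ≥ 1, γ ∈ ℝ, and let I ⊆ ℝ be an open interval. Let ρ, Φ : I × ℝⁿ → ℝ be smooth with ρ(t,x) > 0 for all (t,x), satisfying the continuity equation ∂_t ρ + ∇·(ρ^γ ∇Φ) = 0 and the Hamilton–Jacobi equation ∂_t Φ + (γ/2)·ρ^{γ−1}·‖∇Φ‖² = 0 on I × ℝⁿ (all spatial operators taken in x). Define the velocity field v(t,x) = ρ(t,x)^{γ−1}·∇Φ(t,x). Then for every (t,x) ∈ I × ℝⁿ: ∂_t v + (Dv)·v = −((γ−1)/2)·∇‖v‖² − (γ−1)·(∇·v)·v + ((γ−2)(γ−1)/2)·‖v‖²·∇log ρ, where (Dv)·v denotes the vector with components Σ_j v_j ∂_j v_i (the derivative of v in the direction v). -/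
open MeasureTheory Filter Set
open scoped InnerProductSpace Topology

/-- Partial derivative `∂ⱼ f x` on Euclidean space. -/
noncomputable def pder (n : ℕ) (j : Fin n) (f : EuclideanSpace ℝ (Fin n) → ℝ)
    (x : EuclideanSpace ℝ (Fin n)) : ℝ :=
  fderiv ℝ f x (EuclideanSpace.single j 1)

/-- Divergence `∇·v` of a vector field on Euclidean space. -/
noncomputable def divg (n : ℕ) (v : EuclideanSpace ℝ (Fin n) → EuclideanSpace ℝ (Fin n))
    (x : EuclideanSpace ℝ (Fin n)) : ℝ :=
  ∑ j, pder n j (fun y => v y j) x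

/-- Laplacian `Δf = ∑ⱼ ∂ⱼ∂ⱼ f`. -/
noncomputable def lapl (n : ℕ) (f : EuclideanSpace ℝ (Fin n) → ℝ)
    (x : EuclideanSpace ℝ (Fin n)) : ℝ :=
  ∑ j, pder n j (fun y => pder n j f y) x

/-- Entry `(i,j)` of the Hessian matrix of `f`. -/
noncomputable def hessij (n : ℕ) (f : EuclideanSpace ℝ (Fin n) → ℝ)
    (x : EuclideanSpace ℝ (Fin n)) (i j : Fin n) : ℝ :=
  pder n i (fun y => pder n j f y) x

/-- Hessian quadratic form `Hess f (u,u) = ∑ᵢⱼ (∂ᵢ∂ⱼf) uᵢ uⱼ`. -/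
noncomputable def hessQF (n : ℕ) (f : EuclideanSpace ℝ (Fin n) → ℝ)
    (x u : EuclideanSpace ℝ (Fin n)) : ℝ :=
  ∑ i, ∑ j, hessij n f x i j * u i * u j

/-- Squared Frobenius norm of the Hessian: `‖Hess f‖² = ∑ᵢⱼ (∂ᵢ∂ⱼf)²`. -/
noncomputable def hessFrob (n : ℕ) (f : EuclideanSpace ℝ (Fin n) → ℝ)
    (x : EuclideanSpace ℝ (Fin n)) : ℝ :=
  ∑ i, ∑ j, (hessij n f x i j)^2

/-- Build a Euclidean vector from its coordinates. -/
noncomputable def toE (n : ℕ) (f : Fin n → ℝ) : EuclideanSpace ℝ (Fin n) :=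
  (WithLp.equiv 2 (Fin n → ℝ)).symm f


variable {n : ℕ}

lemma grad_apply (f : EuclideanSpace ℝ (Fin n) → ℝ) (x : EuclideanSpace ℝ (Fin n)) (i : Fin n) :
    gradient f x i = pder n i f x := by
  have h : inner ℝ (gradient f x) (EuclideanSpace.single i (1:ℝ))
      = fderiv ℝ f x (EuclideanSpace.single i 1) := InnerProductSpace.toDual_symm_apply
  rw [EuclideanSpace.inner_single_right] at h
  simpa [pder] using h

lemma normsq_eq (a : EuclideanSpace ℝ (Fin n)) : ‖a‖^2 = ∑ k, (a k)^2 := by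
  rw [EuclideanSpace.norm_eq, Real.sq_sqrt (by positivity)]
  simp [sq_abs]


lemma pder_of_hasFDerivAt {f : EuclideanSpace ℝ (Fin n) → ℝ}
    {L : EuclideanSpace ℝ (Fin n) →L[ℝ] ℝ} {x}
    (h : HasFDerivAt f L x) (j : Fin n) : pder n j f x = L (EuclideanSpace.single j 1) := by
  simp only [pder, h.fderiv]

lemma top_add_one_le : ((⊤:ℕ∞) : WithTop ℕ∞) + 1 ≤ ((⊤:ℕ∞) : WithTop ℕ∞) := by norm_num

section
variable {f : EuclideanSpace ℝ (Fin n) → ℝ} (hf : ContDiff ℝ (⊤:ℕ∞) f)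
include hf

lemma hasF_pder (x : EuclideanSpace ℝ (Fin n)) (j : Fin n) :
    HasFDerivAt (fun y => pder n j f y)
      ((ContinuousLinearMap.apply ℝ ℝ (EuclideanSpace.single j (1:ℝ))).comp
        (fderiv ℝ (fderiv ℝ f) x)) x := by
  have h1 : HasFDerivAt (fderiv ℝ f) (fderiv ℝ (fderiv ℝ f) x) x :=
    (((hf.fderiv_right top_add_one_le).differentiable (by norm_num)) x).hasFDerivAt
  exact ((ContinuousLinearMap.apply ℝ ℝ (EuclideanSpace.single j (1:ℝ))).hasFDerivAt).comp x h1

lemma pder_contDiff (j : Fin n) : ContDiff ℝ (⊤:ℕ∞) (fun y => pder n j f y) :=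
  (hf.fderiv_right top_add_one_le).clm_apply contDiff_const

lemma hess_eq (x : EuclideanSpace ℝ (Fin n)) (i j : Fin n) :
    hessij n f x i j = fderiv ℝ (fderiv ℝ f) x (EuclideanSpace.single i 1)
      (EuclideanSpace.single j 1) := by
  rw [hessij, pder_of_hasFDerivAt (hasF_pder hf x j) i]
  rfl

lemma hess_symm (x : EuclideanSpace ℝ (Fin n)) (i j : Fin n) :
    hessij n f x i j = hessij n f x j i := by
  rw [hess_eq hf, hess_eq hf]
  exact second_derivative_symmetric_of_eventually
    (Filter.Eventually.of_forall fun y => ((hf.differentiable (by norm_num)) y).hasFDerivAt)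
    (((hf.fderiv_right top_add_one_le).differentiable (by norm_num) _).hasFDerivAt) _ _

end

lemma hasF_rpow {r : EuclideanSpace ℝ (Fin n) → ℝ} {x} (hr : DifferentiableAt ℝ r x)
    (hrx : r x ≠ 0) (e : ℝ) :
    HasFDerivAt (fun y => r y ^ e) ((e * r x ^ (e-1)) • fderiv ℝ r x) x :=
  (Real.hasDerivAt_rpow_const (Or.inl hrx)).comp_hasFDerivAt x hr.hasFDerivAt

lemma pder_rpow_mul {r g : EuclideanSpace ℝ (Fin n) → ℝ} {x}
    (hr : DifferentiableAt ℝ r x) (hrx : r x ≠ 0) (hg : DifferentiableAt ℝ g x)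
    (e : ℝ) (j : Fin n) :
    pder n j (fun y => r y ^ e * g y) x
      = e * r x ^ (e-1) * pder n j r x * g x + r x ^ e * pder n j g x := by
  rw [pder_of_hasFDerivAt ((hasF_rpow hr hrx e).fun_mul hg.hasFDerivAt) j]
  simp [pder]
  ring

lemma pder_sq {g : EuclideanSpace ℝ (Fin n) → ℝ} {x} (hg : DifferentiableAt ℝ g x) (j : Fin n) :
    pder n j (fun y => g y ^ 2) x = 2 * g x * pder n j g x := by
  rw [show (fun y => g y ^ 2) = (fun u => u ^ 2) ∘ g from rfl]
  rw [pder_of_hasFDerivAt ((hasDerivAt_pow 2 (g x)).comp_hasFDerivAt x hg.hasFDerivAt) j]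
  simp [pder]

lemma pder_sum {F : Fin n → EuclideanSpace ℝ (Fin n) → ℝ} {x}
    (hF : ∀ k, DifferentiableAt ℝ (F k) x) (j : Fin n) :
    pder n j (fun y => ∑ k, F k y) x = ∑ k, pder n j (F k) x := by
  rw [pder_of_hasFDerivAt (HasFDerivAt.fun_sum (fun k _ => (hF k).hasFDerivAt)) j]
  simp [pder]

lemma pder_neg {g : EuclideanSpace ℝ (Fin n) → ℝ} {x} (j : Fin n) :
    pder n j (fun y => -g y) x = -pder n j g x := by
  simp [pder, fderiv_neg]

lemma pder_const_mul {g : EuclideanSpace ℝ (Fin n) → ℝ} {x} (hg : DifferentiableAt ℝ g x)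
    (c : ℝ) (j : Fin n) :
    pder n j (fun y => c * g y) x = c * pder n j g x := by
  simp [pder, fderiv_const_mul hg]

lemma pder_log {r : EuclideanSpace ℝ (Fin n) → ℝ} {x} (hr : DifferentiableAt ℝ r x)
    (hrx : r x ≠ 0) (j : Fin n) :
    pder n j (fun y => Real.log (r y)) x = (r x)⁻¹ * pder n j r x := by
  rw [show (fun y => Real.log (r y)) = Real.log ∘ r from rfl]
  rw [pder_of_hasFDerivAt ((Real.hasDerivAt_log hrx).comp_hasFDerivAt x hr.hasFDerivAt) j]
  simp [pder]

lemma sum_ab (a b : ℝ) (u w : Fin n → ℝ) :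
    ∑ j, (a * u j + b * w j) = a * (∑ j, u j) + b * (∑ j, w j) := by
  rw [Finset.sum_add_distrib, Finset.mul_sum, Finset.mul_sum]

lemma spatial_main (n : ℕ) (γ : ℝ) (f r : EuclideanSpace ℝ (Fin n) → ℝ)
    (hf : ContDiff ℝ (⊤:ℕ∞) f) (hr : ContDiff ℝ (⊤:ℕ∞) r)
    (hrpos : ∀ y, 0 < r y) (x : EuclideanSpace ℝ (Fin n)) (i : Fin n) :
    ((γ-1) * r x ^ (γ-1-1) * (-(∑ j, pder n j (fun y => r y ^ γ * pder n j f y) x)))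
        * pder n i f x
      + r x ^ (γ-1) * pder n i (fun y => -((γ/2) * r y ^ (γ-1) * ∑ k, (pder n k f y)^2)) x
      + ∑ j, (r x ^ (γ-1) * pder n j f x)
          * pder n j (fun y => r y ^ (γ-1) * pder n i f y) x
    = -(((γ-1)/2) * pder n i (fun y => ∑ k, (r y ^ (γ-1) * pder n k f y)^2) x)
      - ((γ-1) * (∑ j, pder n j (fun y => r y ^ (γ-1) * pder n j f y) x))
          * (r x ^ (γ-1) * pder n i f x)
      + (((γ-2)*(γ-1)/2) * (∑ k, (r x ^ (γ-1) * pder n k f x)^2))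
          * pder n i (fun y => Real.log (r y)) x := by
  have Rpos := hrpos x
  have Rne : r x ≠ 0 := Rpos.ne'
  have hdr : DifferentiableAt ℝ r x := (hr.differentiable (by norm_num)) x
  have hdp : ∀ k, ContDiff ℝ (⊤:ℕ∞) (fun y => pder n k f y) := pder_contDiff hf
  have hdpk : ∀ k, DifferentiableAt ℝ (fun y => pder n k f y) x :=
    fun k => ((hdp k).differentiable (by norm_num)) x
  have hrp : DifferentiableAt ℝ (fun y => r y ^ (γ-1)) x :=
    (hasF_rpow hdr Rne (γ-1)).differentiableAt
  -- per-index product derivative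
  have e1 : ∀ (e : ℝ) (j k : Fin n), pder n j (fun y => r y ^ e * pder n k f y) x
      = e * r x ^ (e-1) * pder n j r x * pder n k f x + r x ^ e * hessij n f x j k := by
    intro e j k
    rw [pder_rpow_mul hdr Rne (hdpk k) e j]
    rfl
  -- HJ-type derivative
  have hW0 : ContDiff ℝ (⊤:ℕ∞) (fun y => ∑ k, (pder n k f y)^2) :=
    ContDiff.sum fun k _ => (hdp k).pow 2
  have hW0d : DifferentiableAt ℝ (fun y => ∑ k, (pder n k f y)^2) x :=
    (hW0.differentiable (by norm_num)) x
  have e2 : pder n i (fun y => -((γ/2) * r y ^ (γ-1) * ∑ k, (pder n k f y)^2)) x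
      = -((γ/2) * ((γ-1) * r x ^ (γ-1-1) * pder n i r x * (∑ k, (pder n k f x)^2)
          + r x ^ (γ-1) * (∑ k, 2 * pder n k f x * hessij n f x i k))) := by
    have hre : (fun y => -((γ/2) * r y ^ (γ-1) * ∑ k, (pder n k f y)^2))
        = fun y => -((γ/2) * (r y ^ (γ-1) * ∑ k, (pder n k f y)^2)) := by
      funext y; ring
    rw [hre, pder_neg, pder_const_mul (hrp.fun_mul hW0d) (γ/2) i,
      pder_rpow_mul hdr Rne hW0d (γ-1) i,
      pder_sum (fun k => ((hdp k).pow 2).differentiable (by norm_num) x) i]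
    have : ∑ k, pder n i (fun y => (pder n k f y)^2) x
        = ∑ k, 2 * pder n k f x * hessij n f x i k := by
      refine Finset.sum_congr rfl fun k _ => ?_
      rw [pder_sq (hdpk k) i]
      rfl
    rw [this]
  -- gradient of |v|^2 pieces
  have e4 : pder n i (fun y => ∑ k, (r y ^ (γ-1) * pder n k f y)^2) x
      = ∑ k, 2 * (r x ^ (γ-1) * pder n k f x)
          * ((γ-1) * r x ^ (γ-1-1) * pder n i r x * pder n k f x
            + r x ^ (γ-1) * hessij n f x i k) := by
    rw [pder_sum (fun k => (hrp.fun_mul (hdpk k)).fun_pow 2) i]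
    refine Finset.sum_congr rfl fun k _ => ?_
    rw [pder_sq (hrp.fun_mul (hdpk k)) i, e1 (γ-1) i k]
  rw [e2, e4, pder_log hdr Rne i]
  -- convert all sums to atoms
  set R := r x with hR
  set Ri := pder n i r x with hRi
  set Pi' := pder n i f x with hPi
  set C := ∑ j, pder n j r x * pder n j f x with hC
  set S := ∑ j, (pder n j f x)^2 with hS
  set L := ∑ j, hessij n f x j j with hL
  set Qi := ∑ j, pder n j f x * hessij n f x i j with hQi
  have c1 : ∑ j, pder n j (fun y => r y ^ γ * pder n j f y) x
      = γ * R^(γ-1) * C + R^γ * L := by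
    rw [hC, hL, ← sum_ab]
    refine Finset.sum_congr rfl fun j _ => ?_
    rw [e1 γ j j]; ring
  have c2 : ∑ k, 2 * pder n k f x * hessij n f x i k = 2 * Qi := by
    rw [hQi, Finset.mul_sum]
    exact Finset.sum_congr rfl fun k _ => by ring
  have c3 : ∑ j, (R ^ (γ-1) * pder n j f x)
        * pder n j (fun y => r y ^ (γ-1) * pder n i f y) x
      = (γ-1) * R^(γ-1) * R^(γ-1-1) * Pi' * C + R^(γ-1) * R^(γ-1) * Qi := by
    rw [hC, hQi, Finset.mul_sum, Finset.mul_sum, ← Finset.sum_add_distrib]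
    refine Finset.sum_congr rfl fun j _ => ?_
    rw [e1 (γ-1) j i, hess_symm hf x j i]
    ring
  have c4 : ∑ k, 2 * (R ^ (γ-1) * pder n k f x)
        * ((γ-1) * R ^ (γ-1-1) * Ri * pder n k f x + R ^ (γ-1) * hessij n f x i k)
      = 2*(γ-1)*R^(γ-1)*R^(γ-1-1)*Ri*S + 2*R^(γ-1)*R^(γ-1)*Qi := by
    rw [hS, hQi, Finset.mul_sum, Finset.mul_sum, ← Finset.sum_add_distrib]
    refine Finset.sum_congr rfl fun k _ => ?_
    ring
  have c5 : ∑ j, pder n j (fun y => r y ^ (γ-1) * pder n j f y) x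
      = (γ-1) * R^(γ-1-1) * C + R^(γ-1) * L := by
    rw [hC, hL, ← sum_ab]
    refine Finset.sum_congr rfl fun j _ => ?_
    rw [e1 (γ-1) j j]; ring
  have c6 : ∑ k, (R ^ (γ-1) * pder n k f x)^2 = R^(γ-1) * R^(γ-1) * S := by
    rw [hS, Finset.mul_sum]
    exact Finset.sum_congr rfl fun k _ => by ring
  rw [c1, c2, c3, c4, c5, c6]
  -- power bookkeeping
  have p1 : R ^ (γ-1-1) = R ^ (γ-2) := by rw [show γ-1-1 = γ-2 from by ring]
  have p2 : R ^ (γ-1) = R ^ (γ-2) * R := by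
    rw [← Real.rpow_add_one Rne (γ-2), show γ-2+1 = γ-1 from by ring]
  have p3 : R ^ γ = R ^ (γ-2) * R * R := by
    rw [← p2, ← Real.rpow_add_one Rne (γ-1), show γ-1+1 = γ from by ring]
  rw [p1, p2, p3]
  field_simp
  ring

/-- Eulerian form of the Lagrangian geodesic equation for the
γ-Wasserstein co-geodesic system.  If `∂ₜρ + ∇·(ρ^γ∇Φ) = 0` and
`∂ₜΦ + (γ/2)ρ^{γ−1}‖∇Φ‖² = 0` on `I × ℝⁿ`, and `v = ρ^{γ−1}∇Φ`, then
`∂ₜv + (Dv)v = −((γ−1)/2)∇‖v‖² − (γ−1)(∇·v)v + ((γ−2)(γ−1)/2)‖v‖²∇log ρ`. -/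
theorem stmt8 (n : ℕ) (hn : 1 ≤ n) (γ : ℝ)
    (I : Set ℝ) (hIopen : IsOpen I) (hIconn : I.OrdConnected)
    (ρ Φ : ℝ → EuclideanSpace ℝ (Fin n) → ℝ)
    (hρ : ContDiffOn ℝ (⊤ : ℕ∞) (fun p : ℝ × EuclideanSpace ℝ (Fin n) => ρ p.1 p.2)
      (I ×ˢ univ))
    (hΦ : ContDiffOn ℝ (⊤ : ℕ∞) (fun p : ℝ × EuclideanSpace ℝ (Fin n) => Φ p.1 p.2)
      (I ×ˢ univ))
    (hρpos : ∀ t ∈ I, ∀ x, 0 < ρ t x)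
    (hcont : ∀ t ∈ I, ∀ x, deriv (fun s => ρ s x) t
      + divg n (fun y => (ρ t y)^γ • gradient (Φ t) y) x = 0)
    (hHJ : ∀ t ∈ I, ∀ x, deriv (fun s => Φ s x) t
      + (γ/2) * (ρ t x)^(γ-1) * ‖gradient (Φ t) x‖^2 = 0)
    (v : ℝ → EuclideanSpace ℝ (Fin n) → EuclideanSpace ℝ (Fin n))
    (hv : ∀ t x, v t x = (ρ t x)^(γ-1) • gradient (Φ t) x) :
    ∀ t ∈ I, ∀ x,
      toE n (fun i => deriv (fun s => v s x i) t)
        + toE n (fun i => ∑ j, v t x j * pder n j (fun y => v t y i) x)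
      = -(((γ-1)/2) • gradient (fun y => ‖v t y‖^2) x)
        - ((γ-1) * divg n (v t) x) • v t x
        + (((γ-2)*(γ-1)/2) * ‖v t x‖^2) • gradient (fun y => Real.log (ρ t y)) x := by
  intro t ht x
  classical
  set G : ℝ × EuclideanSpace ℝ (Fin n) → ℝ := fun p => Φ p.1 p.2 with hGdef
  set Gr : ℝ × EuclideanSpace ℝ (Fin n) → ℝ := fun p => ρ p.1 p.2 with hGrdef
  have hU : IsOpen (I ×ˢ (univ : Set (EuclideanSpace ℝ (Fin n)))) := hIopen.prod isOpen_univ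
  have hGat : ∀ s ∈ I, ∀ y, ContDiffAt ℝ (⊤:ℕ∞) G (s, y) := fun s hs y =>
    hΦ.contDiffAt (hU.mem_nhds ⟨hs, trivial⟩)
  have hGrat : ∀ s ∈ I, ∀ y, ContDiffAt ℝ (⊤:ℕ∞) Gr (s, y) := fun s hs y =>
    hρ.contDiffAt (hU.mem_nhds ⟨hs, trivial⟩)
  -- slice smoothness
  have hfC : ContDiff ℝ (⊤:ℕ∞) (Φ t) := by
    rw [contDiff_iff_contDiffAt]
    intro y
    exact (hGat t ht y).comp y (ContDiffAt.prodMk contDiffAt_const contDiffAt_id)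
  have hrC : ContDiff ℝ (⊤:ℕ∞) (ρ t) := by
    rw [contDiff_iff_contDiffAt]
    intro y
    exact (hGrat t ht y).comp y (ContDiffAt.prodMk contDiffAt_const contDiffAt_id)
  -- time derivatives
  have hΦt : ∀ s ∈ I, ∀ y,
      HasDerivAt (fun s' => Φ s' y) (fderiv ℝ G (s, y) (1, 0)) s := by
    intro s hs y
    have h1 : HasFDerivAt G (fderiv ℝ G (s, y)) (s, y) :=
      ((hGat s hs y).differentiableAt (by norm_num)).hasFDerivAt
    have h2 : HasFDerivAt (fun s' : ℝ => (s', y)) ((ContinuousLinearMap.id ℝ ℝ).prod 0) s :=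
      HasFDerivAt.prodMk (hasFDerivAt_id s) (hasFDerivAt_const y s)
    simpa [Function.comp_def] using (h1.comp s h2).hasDerivAt
  have hρt : ∀ s ∈ I, ∀ y,
      HasDerivAt (fun s' => ρ s' y) (fderiv ℝ Gr (s, y) (1, 0)) s := by
    intro s hs y
    have h1 : HasFDerivAt Gr (fderiv ℝ Gr (s, y)) (s, y) :=
      ((hGrat s hs y).differentiableAt (by norm_num)).hasFDerivAt
    have h2 : HasFDerivAt (fun s' : ℝ => (s', y)) ((ContinuousLinearMap.id ℝ ℝ).prod 0) s :=
      HasFDerivAt.prodMk (hasFDerivAt_id s) (hasFDerivAt_const y s)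
    simpa [Function.comp_def] using (h1.comp s h2).hasDerivAt
  -- spatial fderiv of slice
  have hsliceF : ∀ s ∈ I, ∀ y,
      HasFDerivAt (Φ s) ((fderiv ℝ G (s, y)).comp
        ((0 : EuclideanSpace ℝ (Fin n) →L[ℝ] ℝ).prod
          (ContinuousLinearMap.id ℝ (EuclideanSpace ℝ (Fin n))))) y := by
    intro s hs y
    have h1 : HasFDerivAt G (fderiv ℝ G (s, y)) (s, y) :=
      ((hGat s hs y).differentiableAt (by norm_num)).hasFDerivAt
    have h2 : HasFDerivAt (fun y' : EuclideanSpace ℝ (Fin n) => (s, y'))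
        ((0 : EuclideanSpace ℝ (Fin n) →L[ℝ] ℝ).prod
          (ContinuousLinearMap.id ℝ (EuclideanSpace ℝ (Fin n)))) y :=
      HasFDerivAt.prodMk (hasFDerivAt_const s y) (hasFDerivAt_id y)
    exact h1.comp y h2
  -- second derivative of G
  have hev : ∀ᶠ p in 𝓝 (t, x), HasFDerivAt G (fderiv ℝ G p) p := by
    filter_upwards [hU.mem_nhds ⟨ht, trivial⟩] with p hp
    exact ((hΦ.contDiffAt (hU.mem_nhds hp)).differentiableAt (by norm_num)).hasFDerivAt
  have hF'' : HasFDerivAt (fderiv ℝ G) (fderiv ℝ (fderiv ℝ G) (t, x)) (t, x) :=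
    (((hGat t ht x).fderiv_right (m := (⊤:ℕ∞)) (by norm_num)).differentiableAt
      (by norm_num)).hasFDerivAt
  have hsym := second_derivative_symmetric_of_eventually hev hF''
  have hmixt : ∀ u : ℝ × EuclideanSpace ℝ (Fin n),
      HasDerivAt (fun s => fderiv ℝ G (s, x) u)
        (fderiv ℝ (fderiv ℝ G) (t, x) (1, 0) u) t := by
    intro u
    have h2 : HasFDerivAt (fun s' : ℝ => (s', x)) ((ContinuousLinearMap.id ℝ ℝ).prod 0) t :=
      HasFDerivAt.prodMk (hasFDerivAt_id t) (hasFDerivAt_const x t)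
    have h3 := ((ContinuousLinearMap.apply ℝ ℝ u).hasFDerivAt.comp (t, x) hF'')
    simpa [Function.comp_def] using (h3.comp t h2).hasDerivAt
  -- coordinates of v
  have hvc : ∀ s y (k : Fin n), v s y k = (ρ s y)^(γ-1) * pder n k (Φ s) y := by
    intro s y k
    rw [hv]
    simp only [PiLp.smul_apply, smul_eq_mul, grad_apply]
  -- continuity equation reformulated
  have hdivρ : divg n (fun y => (ρ t y)^γ • gradient (Φ t) y) x
      = ∑ j, pder n j (fun y => (ρ t y)^γ * pder n j (Φ t) y) x := by
    simp only [divg]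
    refine Finset.sum_congr rfl fun j _ => ?_
    congr 1
    funext y
    simp only [PiLp.smul_apply, smul_eq_mul, grad_apply]
  have hcρ : fderiv ℝ Gr (t, x) (1, 0)
      = -(∑ j, pder n j (fun y => (ρ t y)^γ * pder n j (Φ t) y) x) := by
    have h0 := hcont t ht x
    rw [(hρt t ht x).deriv, hdivρ] at h0
    linarith
  -- HJ equation reformulated: the mixed partial
  have hHJfun : (fun y => fderiv ℝ G (t, y) (1, 0))
      = fun y => -((γ/2) * (ρ t y)^(γ-1) * ∑ k, (pder n k (Φ t) y)^2) := by
    funext y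
    rw [← (hΦt t ht y).deriv]
    have h0 := hHJ t ht y
    have hnorm : ‖gradient (Φ t) y‖^2 = ∑ k, (pder n k (Φ t) y)^2 := by
      rw [normsq_eq]
      exact Finset.sum_congr rfl fun k _ => by rw [grad_apply]
    rw [hnorm] at h0
    linarith
  have hMi : ∀ i : Fin n, fderiv ℝ (fderiv ℝ G) (t, x) (1, 0) (0, EuclideanSpace.single i 1)
      = pder n i (fun y => -((γ/2) * (ρ t y)^(γ-1) * ∑ k, (pder n k (Φ t) y)^2)) x := by
    intro i
    rw [hsym (1, 0) (0, EuclideanSpace.single i 1)]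
    have h2 : HasFDerivAt (fun y' : EuclideanSpace ℝ (Fin n) => (t, y'))
        ((0 : EuclideanSpace ℝ (Fin n) →L[ℝ] ℝ).prod
          (ContinuousLinearMap.id ℝ (EuclideanSpace ℝ (Fin n)))) x :=
      HasFDerivAt.prodMk (hasFDerivAt_const t x) (hasFDerivAt_id x)
    have h3 := (ContinuousLinearMap.apply ℝ ℝ ((1:ℝ), (0:EuclideanSpace ℝ (Fin n)))).hasFDerivAt.comp (t, x) hF''
    have h4 : HasFDerivAt (fun y => fderiv ℝ G (t, y) (1, 0))
        (((ContinuousLinearMap.apply ℝ ℝ ((1:ℝ), (0:EuclideanSpace ℝ (Fin n)))).comp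
            (fderiv ℝ (fderiv ℝ G) (t, x))).comp
          ((0 : EuclideanSpace ℝ (Fin n) →L[ℝ] ℝ).prod
            (ContinuousLinearMap.id ℝ (EuclideanSpace ℝ (Fin n))))) x := h3.comp x h2
    have h5 : pder n i (fun y => fderiv ℝ G (t, y) (1, 0)) x
        = fderiv ℝ (fderiv ℝ G) (t, x) (0, EuclideanSpace.single i 1) (1, 0) := by
      rw [pder_of_hasFDerivAt h4 i]
      simp
    rw [← hHJfun]
    exact h5.symm
  -- the time derivative of v-component
  have hslpd : ∀ s ∈ I, ∀ (i : Fin n),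
      pder n i (Φ s) x = fderiv ℝ G (s, x) (0, EuclideanSpace.single i 1) := by
    intro s hs i
    rw [pder_of_hasFDerivAt (hsliceF s hs x) i]
    simp
  have hderiv : ∀ i : Fin n, deriv (fun s => v s x i) t
      = ((γ-1) * (ρ t x) ^ (γ-1-1)
            * (-(∑ j, pder n j (fun y => (ρ t y)^γ * pder n j (Φ t) y) x)))
          * pder n i (Φ t) x
        + (ρ t x) ^ (γ-1)
            * pder n i (fun y => -((γ/2) * (ρ t y)^(γ-1) * ∑ k, (pder n k (Φ t) y)^2)) x := by
    intro i
    have hvx_ev : (fun s => v s x i)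
        =ᶠ[𝓝 t] fun s => (ρ s x)^(γ-1) * fderiv ℝ G (s, x) (0, EuclideanSpace.single i 1) := by
      filter_upwards [hIopen.mem_nhds ht] with s hs
      rw [hvc s x i, hslpd s hs i]
    have hA : HasDerivAt (fun s => (ρ s x)^(γ-1))
        ((γ-1) * (ρ t x) ^ (γ-1-1) * fderiv ℝ Gr (t, x) (1, 0)) t := by
      have h := (Real.hasDerivAt_rpow_const (x := ρ t x) (p := γ-1)
        (Or.inl (hρpos t ht x).ne')).comp t (hρt t ht x)
      simpa [mul_assoc, Function.comp_def] using h
    have hB := hmixt (0, EuclideanSpace.single i 1)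
    have hprod := hA.fun_mul hB
    rw [hvx_ev.deriv_eq, hprod.deriv, hcρ, hMi i, ← hslpd t ht i]
  -- reduce the vector goal to coordinates
  have hext : ∀ g h : EuclideanSpace ℝ (Fin n), (∀ i, g i = h i) → g = h :=
    fun g h hh => PiLp.ext hh
  refine hext _ _ fun i => ?_
  simp only [toE, PiLp.add_apply, PiLp.sub_apply, PiLp.neg_apply, PiLp.smul_apply,
    WithLp.equiv_symm_apply, PiLp.toLp_apply, smul_eq_mul]
  -- rewrite remaining pieces spatially
  have hgrad1 : gradient (fun y => ‖v t y‖^2) x i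
      = pder n i (fun y => ∑ k, ((ρ t y)^(γ-1) * pder n k (Φ t) y)^2) x := by
    rw [grad_apply]
    congr 1
    funext y
    rw [normsq_eq]
    exact Finset.sum_congr rfl fun k _ => by rw [hvc]
  have hdivv : divg n (v t) x
      = ∑ j, pder n j (fun y => (ρ t y)^(γ-1) * pder n j (Φ t) y) x := by
    simp only [divg]
    refine Finset.sum_congr rfl fun j _ => ?_
    congr 1
    funext y
    rw [hvc]
  have hnormx : ‖v t x‖^2 = ∑ k, ((ρ t x)^(γ-1) * pder n k (Φ t) x)^2 := by
    rw [normsq_eq]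
    exact Finset.sum_congr rfl fun k _ => by rw [hvc]
  rw [hderiv i, hgrad1, grad_apply, hdivv, hnormx]
  simp only [hvc]
  exact spatial_main n γ (Φ t) (ρ t) hfC hrC (hρpos t ht) x i
end

section
/- Let n ≥ 1, γ ∈ ℝ, let ρ, μ : ℝⁿ → ℝ be smooth with ρ(x) > 0 and μ(x) > 0 for all x, and let Φ : ℝⁿ → ℝ be smooth with compact support. Then ∫_{ℝⁿ} ( γ·μ(x)^{γ−2}·⟨∇μ(x), ∇Φ(x)⟩ + μ(x)^{γ−1}·ΔΦ(x) )·ρ(x) dx = ∫_{ℝⁿ} Φ(x)·∇·( μ^γ ∇(ρ/μ) )(x) dx. -/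
open MeasureTheory Filter Set
open scoped InnerProductSpace Topology

section aux

variable {n : ℕ}

lemma pder_hasFDerivAt {f : EuclideanSpace ℝ (Fin n) → ℝ} {x : EuclideanSpace ℝ (Fin n)}
    {f' : EuclideanSpace ℝ (Fin n) →L[ℝ] ℝ} (h : HasFDerivAt f f' x) (j : Fin n) :
    pder n j f x = f' (EuclideanSpace.single j 1) := by
  rw [pder, h.fderiv]

lemma contDiff_pder {f : EuclideanSpace ℝ (Fin n) → ℝ} (hf : ContDiff ℝ (⊤ : ℕ∞) f) (j : Fin n) :
    ContDiff ℝ (⊤ : ℕ∞) (pder n j f) := by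
  have h1 : ContDiff ℝ (⊤ : ℕ∞) (fderiv ℝ f) := hf.fderiv_right (by exact_mod_cast le_top)
  exact h1.clm_apply contDiff_const

lemma pder_mul {f g : EuclideanSpace ℝ (Fin n) → ℝ} {x : EuclideanSpace ℝ (Fin n)}
    (hf : DifferentiableAt ℝ f x) (hg : DifferentiableAt ℝ g x) (j : Fin n) :
    pder n j (fun y => f y * g y) x = pder n j f x * g x + f x * pder n j g x := by
  simp only [pder, fderiv_fun_mul hf hg, ContinuousLinearMap.add_apply, ContinuousLinearMap.coe_smul',
    Pi.smul_apply, smul_eq_mul]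
  ring

lemma pder_sub {f g : EuclideanSpace ℝ (Fin n) → ℝ} {x : EuclideanSpace ℝ (Fin n)}
    (hf : DifferentiableAt ℝ f x) (hg : DifferentiableAt ℝ g x) (j : Fin n) :
    pder n j (fun y => f y - g y) x = pder n j f x - pder n j g x := by
  simp only [pder, fderiv_fun_sub hf hg, ContinuousLinearMap.sub_apply]

lemma pder_rpow {f : EuclideanSpace ℝ (Fin n) → ℝ} {x : EuclideanSpace ℝ (Fin n)}
    (hf : DifferentiableAt ℝ f x) (hfx : f x ≠ 0) (c : ℝ) (j : Fin n) :
    pder n j (fun y => f y ^ c) x = c * f x ^ (c - 1) * pder n j f x := by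
  have h := (Real.hasStrictDerivAt_rpow_const (p := c)
    (Or.inl hfx)).hasDerivAt.comp_hasFDerivAt x hf.hasFDerivAt
  have h2 : HasFDerivAt (fun y => f y ^ c) ((c * f x ^ (c - 1)) • fderiv ℝ f x) x := by
    simpa [Function.comp_def, hf.hasFDerivAt.fderiv] using h
  rw [pder_hasFDerivAt h2, ContinuousLinearMap.smul_apply, smul_eq_mul, pder]

lemma pder_inv {f : EuclideanSpace ℝ (Fin n) → ℝ} {x : EuclideanSpace ℝ (Fin n)}
    (hf : DifferentiableAt ℝ f x) (hfx : f x ≠ 0) (j : Fin n) :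
    pder n j (fun y => (f y)⁻¹) x = -((f x) ^ 2)⁻¹ * pder n j f x := by
  have h := (hasDerivAt_inv hfx).comp_hasFDerivAt x hf.hasFDerivAt
  have h2 : HasFDerivAt (fun y => (f y)⁻¹) ((-((f x) ^ 2)⁻¹) • fderiv ℝ f x) x := by
    simpa [Function.comp_def, hf.hasFDerivAt.fderiv] using h
  rw [pder_hasFDerivAt h2, ContinuousLinearMap.smul_apply, smul_eq_mul, pder]

lemma diff_inv {f : EuclideanSpace ℝ (Fin n) → ℝ} {x : EuclideanSpace ℝ (Fin n)}
    (hf : DifferentiableAt ℝ f x) (hfx : f x ≠ 0) :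
    DifferentiableAt ℝ (fun y => (f y)⁻¹) x :=
  ((hasDerivAt_inv hfx).comp_hasFDerivAt x hf.hasFDerivAt).differentiableAt

lemma pder_div {f g : EuclideanSpace ℝ (Fin n) → ℝ} {x : EuclideanSpace ℝ (Fin n)}
    (hf : DifferentiableAt ℝ f x) (hg : DifferentiableAt ℝ g x) (hgx : g x ≠ 0) (j : Fin n) :
    pder n j (fun y => f y / g y) x
      = (pder n j f x * g x - f x * pder n j g x) / (g x) ^ 2 := by
  have he : (fun y => f y / g y) = fun y => f y * (g y)⁻¹ := by
    funext y; rw [div_eq_mul_inv]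
  rw [he, pder_mul hf (diff_inv hg hgx) j, pder_inv hg hgx j]
  field_simp
  ring

lemma gradient_apply (f : EuclideanSpace ℝ (Fin n) → ℝ) (x : EuclideanSpace ℝ (Fin n))
    (j : Fin n) : gradient f x j = pder n j f x := by
  have h : pder n j f x = ⟪gradient f x, EuclideanSpace.single j (1 : ℝ)⟫_ℝ := by
    rw [pder, gradient]
    exact (InnerProductSpace.toDual_symm_apply).symm
  rw [h, EuclideanSpace.inner_single_right]
  simp

lemma integral_pder_eq_zero {f : EuclideanSpace ℝ (Fin n) → ℝ} (j : Fin n)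
    (hf : Differentiable ℝ f)
    (h1 : Integrable f) (h2 : Integrable (fun x => pder n j f x)) :
    ∫ x, pder n j f x = 0 := by
  have h := integral_mul_fderiv_eq_neg_fderiv_mul_of_integrable (μ := volume)
      (f := fun _ : EuclideanSpace ℝ (Fin n) => (1 : ℝ)) (g := f)
      (v := EuclideanSpace.single j 1)
      ?_ ?_ ?_ (fun x _ => differentiableAt_const 1) (fun x _ => hf x)
  · simpa [pder, fderiv_fun_const] using h
  · simp only [fderiv_fun_const, Pi.zero_apply, ContinuousLinearMap.zero_apply, zero_mul]
    exact integrable_zero _ _ _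
  · simpa [pder] using h2
  · simpa using h1

end aux

/-- The `j`-th component of the flux `μ^γ ∇(ρ/μ)`. -/
noncomputable def Qf (n : ℕ) (γ : ℝ) (ρ μ : EuclideanSpace ℝ (Fin n) → ℝ) (j : Fin n)
    (y : EuclideanSpace ℝ (Fin n)) : ℝ :=
  μ y ^ γ * pder n j (fun z => ρ z / μ z) y

/-- The `j`-th component of the compactly supported field used for integration by parts. -/
noncomputable def Wc (n : ℕ) (γ : ℝ) (ρ μ Φ : EuclideanSpace ℝ (Fin n) → ℝ) (j : Fin n)
    (y : EuclideanSpace ℝ (Fin n)) : ℝ :=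
  μ y ^ (γ - 1) * (ρ y * pder n j Φ y) - Φ y * (μ y ^ γ * pder n j (fun z => ρ z / μ z) y)

lemma perj (n : ℕ) (γ : ℝ) (ρ μ Φ : EuclideanSpace ℝ (Fin n) → ℝ)
    (hρ : ContDiff ℝ (⊤ : ℕ∞) ρ) (hμ : ContDiff ℝ (⊤ : ℕ∞) μ) (hΦ : ContDiff ℝ (⊤ : ℕ∞) Φ)
    (hμpos : ∀ x, 0 < μ x) (j : Fin n) (x : EuclideanSpace ℝ (Fin n)) :
    γ * (μ x) ^ (γ - 2) * (pder n j μ x * pder n j Φ x) * ρ x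
      + (μ x) ^ (γ - 1) * pder n j (fun y => pder n j Φ y) x * ρ x
    = Φ x * pder n j (fun y => Qf n γ ρ μ j y) x
      + pder n j (fun y => Wc n γ ρ μ Φ j y) x := by
  have hμne : ∀ y, μ y ≠ 0 := fun y => (hμpos y).ne'
  have hone : ((⊤ : ℕ∞) : WithTop ℕ∞) ≠ 0 := by simp
  have dμ : DifferentiableAt ℝ μ x := hμ.differentiable hone x
  have dρ : DifferentiableAt ℝ ρ x := hρ.differentiable hone x
  have dΦ : DifferentiableAt ℝ Φ x := hΦ.differentiable hone x
  have dpΦ : DifferentiableAt ℝ (fun y => pder n j Φ y) x :=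
    (contDiff_pder hΦ j).differentiable hone x
  have hr : ContDiff ℝ (⊤ : ℕ∞) (fun z => ρ z / μ z) := hρ.div hμ hμne
  have dpr : DifferentiableAt ℝ (fun y => pder n j (fun z => ρ z / μ z) y) x :=
    (contDiff_pder hr j).differentiable hone x
  have hμpow : ∀ c : ℝ, ContDiff ℝ (⊤ : ℕ∞) (fun y => μ y ^ c) := fun c =>
    contDiff_iff_contDiffAt.2 fun y =>
      (Real.contDiffAt_rpow_const_of_ne (hμne y)).comp y hμ.contDiffAt
  have dμγ : DifferentiableAt ℝ (fun y => μ y ^ γ) x := (hμpow γ).differentiable hone x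
  have dμγ1 : DifferentiableAt ℝ (fun y => μ y ^ (γ - 1)) x :=
    (hμpow (γ - 1)).differentiable hone x
  have dq : DifferentiableAt ℝ (fun y => μ y ^ γ * pder n j (fun z => ρ z / μ z) y) x :=
    dμγ.mul dpr
  simp only [Wc, Qf]
  rw [pder_sub (dμγ1.fun_mul (dρ.fun_mul dpΦ)) (dΦ.fun_mul dq) j,
      pder_mul dμγ1 (dρ.fun_mul dpΦ) j, pder_mul dρ dpΦ j, pder_mul dΦ dq j,
      pder_mul dμγ dpr j,
      pder_rpow dμ (hμne x) γ j, pder_rpow dμ (hμne x) (γ - 1) j,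
      pder_div dρ dμ (hμne x) j]
  have e3 : γ - 1 - 1 = γ - 2 := by ring
  rw [e3]
  have e1 : μ x ^ (γ - 1) = μ x ^ (γ - 2) * μ x := by
    rw [← Real.rpow_add_one (hμne x)]
    congr 1
    ring
  have e2 : μ x ^ γ = μ x ^ (γ - 2) * μ x * μ x := by
    rw [← Real.rpow_add_one (hμne x), ← Real.rpow_add_one (hμne x)]
    congr 1
    ring
  rw [e1, e2]
  generalize pder n j (fun y => pder n j (fun z => ρ z / μ z) y) x = A
  generalize pder n j (fun y => pder n j Φ y) x = B
  generalize pder n j μ x = Pm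
  generalize pder n j ρ x = Pr
  generalize pder n j Φ x = Pf
  have hx0 : μ x ≠ 0 := hμne x
  field_simp
  ring

/-- the Kolmogorov forward operator `L*_γρ = ∇·(μ^γ∇(ρ/μ))` is the
adjoint of the generator `L_γΦ = γμ^{γ−2}⟨∇μ,∇Φ⟩ + μ^{γ−1}ΔΦ`:
`∫ (L_γΦ) ρ dx = ∫ Φ (L*_γρ) dx`. -/
theorem stmt10 (n : ℕ) (hn : 1 ≤ n) (γ : ℝ)
    (ρ μ : EuclideanSpace ℝ (Fin n) → ℝ)
    (hρ : ContDiff ℝ (⊤ : ℕ∞) ρ) (hμ : ContDiff ℝ (⊤ : ℕ∞) μ)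
    (hρpos : ∀ x, 0 < ρ x) (hμpos : ∀ x, 0 < μ x)
    (Φ : EuclideanSpace ℝ (Fin n) → ℝ) (hΦ : ContDiff ℝ (⊤ : ℕ∞) Φ)
    (hΦc : HasCompactSupport Φ) :
    ∫ x, (γ * (μ x)^(γ-2) * ⟪gradient μ x, gradient Φ x⟫_ℝ
        + (μ x)^(γ-1) * lapl n Φ x) * ρ x
      = ∫ x, Φ x * divg n (fun y => (μ y)^γ • gradient (fun z => ρ z / μ z) y) x := by
  have hμne : ∀ x, μ x ≠ 0 := fun x => (hμpos x).ne'
  have hone : ((⊤ : ℕ∞) : WithTop ℕ∞) ≠ 0 := by simp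
  have hr : ContDiff ℝ (⊤ : ℕ∞) (fun z => ρ z / μ z) := hρ.div hμ hμne
  have hμpow : ∀ c : ℝ, ContDiff ℝ (⊤ : ℕ∞) (fun y => μ y ^ c) := fun c =>
    contDiff_iff_contDiffAt.2 fun y =>
      (Real.contDiffAt_rpow_const_of_ne (hμne y)).comp y hμ.contDiffAt
  -- smoothness of the auxiliary functions
  have hQs : ∀ j, ContDiff ℝ (⊤ : ℕ∞) (fun y => Qf n γ ρ μ j y) := by
    intro j
    simp only [Qf]
    exact (hμpow γ).mul (contDiff_pder hr j)
  have hWs : ∀ j, ContDiff ℝ (⊤ : ℕ∞) (fun y => Wc n γ ρ μ Φ j y) := by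
    intro j
    simp only [Wc]
    exact ((hμpow (γ - 1)).mul (hρ.mul (contDiff_pder hΦ j))).sub
      (hΦ.mul ((hμpow γ).mul (contDiff_pder hr j)))
  -- vanishing outside the support of Φ
  set K := tsupport Φ with hK
  have hKc : IsCompact K := hΦc
  have hΦ0 : ∀ x ∉ K, Φ x = 0 := fun x hx => image_eq_zero_of_notMem_tsupport hx
  have hvanish : ∀ (g : EuclideanSpace ℝ (Fin n) → ℝ), (∀ y ∉ K, g y = 0) →
      ∀ (j : Fin n) x, x ∉ K → pder n j g x = 0 := by
    intro g hg j x hx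
    have hev : g =ᶠ[𝓝 x] fun _ => (0 : ℝ) := by
      filter_upwards [(isClosed_tsupport Φ).isOpen_compl.mem_nhds hx] with y hy
      exact hg y hy
    rw [pder, hev.fderiv_eq]
    simp
  have hpΦ0 : ∀ (j : Fin n) x, x ∉ K → pder n j Φ x = 0 := hvanish Φ hΦ0
  have hW0 : ∀ (j : Fin n) y, y ∉ K → Wc n γ ρ μ Φ j y = 0 := by
    intro j y hy
    simp [Wc, hΦ0 y hy, hpΦ0 j y hy]
  -- integrability
  have hIntQ : Integrable (fun x => ∑ j, Φ x * pder n j (fun y => Qf n γ ρ μ j y) x) := by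
    apply Continuous.integrable_of_hasCompactSupport
    · exact continuous_finset_sum _ fun j _ =>
        hΦ.continuous.mul (contDiff_pder (hQs j) j).continuous
    · apply HasCompactSupport.intro hKc
      intro x hx
      simp [hΦ0 x hx]
  have hIntW : ∀ j : Fin n, Integrable (fun y => Wc n γ ρ μ Φ j y) := by
    intro j
    apply Continuous.integrable_of_hasCompactSupport (hWs j).continuous
    exact HasCompactSupport.intro hKc (hW0 j)
  have hIntpW : ∀ j : Fin n, Integrable (fun x => pder n j (fun y => Wc n γ ρ μ Φ j y) x) := by
    intro j
    apply Continuous.integrable_of_hasCompactSupport (contDiff_pder (hWs j) j).continuous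
    exact HasCompactSupport.intro hKc (hvanish _ (hW0 j) j)
  have hIntsumW : Integrable (fun x => ∑ j, pder n j (fun y => Wc n γ ρ μ Φ j y) x) :=
    integrable_finset_sum _ fun j _ => hIntpW j
  -- pointwise identity
  have key : ∀ x, (γ * (μ x)^(γ-2) * ⟪gradient μ x, gradient Φ x⟫_ℝ
      + (μ x)^(γ-1) * lapl n Φ x) * ρ x
      = (∑ j, Φ x * pder n j (fun y => Qf n γ ρ μ j y) x)
        + ∑ j, pder n j (fun y => Wc n γ ρ μ Φ j y) x := by
    intro x
    have hin : ⟪gradient μ x, gradient Φ x⟫_ℝ = ∑ j, pder n j μ x * pder n j Φ x := by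
      rw [PiLp.inner_apply]
      refine Finset.sum_congr rfl fun j _ => ?_
      simp [RCLike.inner_apply, gradient_apply, mul_comm]
    rw [hin, lapl, Finset.mul_sum, Finset.mul_sum, add_mul, Finset.sum_mul, Finset.sum_mul,
      ← Finset.sum_add_distrib, ← Finset.sum_add_distrib]
    refine Finset.sum_congr rfl fun j _ => ?_
    have h := perj n γ ρ μ Φ hρ hμ hΦ hμpos j x
    linear_combination h
  -- divergence rewriting
  have hdiv : ∀ x, Φ x * divg n (fun y => (μ y)^γ • gradient (fun z => ρ z / μ z) y) x
      = ∑ j, Φ x * pder n j (fun y => Qf n γ ρ μ j y) x := by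
    intro x
    rw [divg, Finset.mul_sum]
    refine Finset.sum_congr rfl fun j _ => ?_
    have hfn : (fun y => ((μ y)^γ • gradient (fun z => ρ z / μ z) y) j)
        = fun y => Qf n γ ρ μ j y := by
      funext y
      simp only [Qf, PiLp.smul_apply, smul_eq_mul]
      rw [gradient_apply]
    rw [hfn]
  calc ∫ x, (γ * (μ x)^(γ-2) * ⟪gradient μ x, gradient Φ x⟫_ℝ
        + (μ x)^(γ-1) * lapl n Φ x) * ρ x
      = ∫ x, ((∑ j, Φ x * pder n j (fun y => Qf n γ ρ μ j y) x)
        + ∑ j, pder n j (fun y => Wc n γ ρ μ Φ j y) x) := by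
        exact integral_congr_ae (Eventually.of_forall key)
    _ = (∫ x, ∑ j, Φ x * pder n j (fun y => Qf n γ ρ μ j y) x)
        + ∫ x, ∑ j, pder n j (fun y => Wc n γ ρ μ Φ j y) x := integral_add hIntQ hIntsumW
    _ = ∫ x, ∑ j, Φ x * pder n j (fun y => Qf n γ ρ μ j y) x := by
        have hz : ∫ x, ∑ j, pder n j (fun y => Wc n γ ρ μ Φ j y) x = 0 := by
          rw [integral_finset_sum _ fun j _ => hIntpW j]
          refine Finset.sum_eq_zero fun j _ => ?_
          exact integral_pder_eq_zero j ((hWs j).differentiable hone) (hIntW j) (hIntpW j)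
        rw [hz, add_zero]
    _ = ∫ x, Φ x * divg n (fun y => (μ y)^γ • gradient (fun z => ρ z / μ z) y) x := by
        refine integral_congr_ae (Eventually.of_forall fun x => ?_)
        exact (hdiv x).symm
end
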